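/- Let n be a finite-dimensional nilpotent Lie algebra over k and V a U(n)-module such that every vector of V is n-torsion (V = ∪_m V^{n^m}) and the subspace V^n of vectors killed by n is finite-dimensional. Then for every m ≥ 1, the subspace V^{n^m} = {v ∈ V : n^m v = 0} is finite-dimensional. -/

import Mathlib

open UniversalEnvelopingAlgebra

attribute [local instance 100] LieRing.ofAssociativeRing

/-- The image of the Lie algebra `L` inside its universal enveloping algebra,
as a `k`-submodule (so that `(augSpan k L) ^ m` is the span of products of `m`
elements of `L`). -/
noncomputable def augSpan (k : Type) [Field k] (L : Type) [LieRing L] [LieAlgebra k L] :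
    Submodule k (UniversalEnvelopingAlgebra k L) :=
  Submodule.span k (Set.range (ι k : L →ₗ⁅k⁆ UniversalEnvelopingAlgebra k L))

/-- `V^{n^m}`-style annihilator: the subspace of vectors killed by every element of
the given subspace `N` of `U(L)`. -/
noncomputable def annOf (k : Type) [Field k] (L : Type) [LieRing L] [LieAlgebra k L]
    (V : Type) [AddCommGroup V] [Module (UniversalEnvelopingAlgebra k L) V]
    [Module k V] [IsScalarTower k (UniversalEnvelopingAlgebra k L) V]
    (N : Submodule k (UniversalEnvelopingAlgebra k L)) : Submodule k V where
  carrier := {v | ∀ x ∈ N, x • v = 0}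
  add_mem' := by
    intro a b ha hb x hx
    rw [smul_add, ha x hx, hb x hx, add_zero]
  zero_mem' := by
    intro x hx
    simp
  smul_mem' := by
    intro c v hv x hx
    rw [← smul_comm c x v, hv x hx, smul_zero]

/-- `V^{n^m}` : the subspace of vectors killed by all products of `m` elements of `L`. -/
noncomputable def annN (k : Type) [Field k] (L : Type) [LieRing L] [LieAlgebra k L]
    (V : Type) [AddCommGroup V] [Module (UniversalEnvelopingAlgebra k L) V]
    [Module k V] [IsScalarTower k (UniversalEnvelopingAlgebra k L) V] (m : ℕ) :
    Submodule k V :=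
  annOf k L V ((augSpan k L) ^ m)

/-- If a linear map has finite-dimensional kernel and codomain, its domain is
finite-dimensional. -/
lemma fd_of_fd_ker_of_fd {k A B : Type} [Field k] [AddCommGroup A] [Module k A]
    [AddCommGroup B] [Module k B] [FiniteDimensional k B]
    (f : A →ₗ[k] B) (hker : FiniteDimensional k (LinearMap.ker f)) :
    FiniteDimensional k A := by
  refine Module.finite_def.mpr (Submodule.fg_of_fg_map_of_fg_inf_ker f ?_ ?_)
  · exact (Module.Finite.iff_fg (N := (⊤ : Submodule k A).map f)).mp inferInstance
  · rw [top_inf_eq]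
    exact (Module.Finite.iff_fg).mp hker

/- STATEMENT 5: if `V` is an `U(n)`-module every vector of which is `n`-torsion and whose
subspace `V^n` of `n`-invariants is finite-dimensional, then each `V^{n^m}` is
finite-dimensional. -/
theorem stmt5 (k : Type) [Field k] [CharZero k]
    (L : Type) [LieRing L] [LieAlgebra k L] [FiniteDimensional k L]
    [LieRing.IsNilpotent L]
    (V : Type) [AddCommGroup V] [Module (UniversalEnvelopingAlgebra k L) V]
    [Module k V] [IsScalarTower k (UniversalEnvelopingAlgebra k L) V]
    (htor : ∀ v : V, ∃ m : ℕ, v ∈ annN k L V m)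
    (hfd : FiniteDimensional k (annN k L V 1)) :
    ∀ m : ℕ, 1 ≤ m → FiniteDimensional k (annN k L V m) := by
  classical
  set U := UniversalEnvelopingAlgebra k L
  let b := Module.finBasis k L
  -- if v is killed by each `ι (b i)`, then it is killed by all of `augSpan`
  have key : ∀ v : V, (∀ i, (ι k (b i) : U) • v = 0) → v ∈ annN k L V 1 := by
    intro v hv x hx
    rw [pow_one] at hx
    induction hx using Submodule.span_induction with
    | mem x hx =>
        obtain ⟨y, rfl⟩ := hx
        have hy : (ι k y : U) = ∑ i, b.repr y i • (ι k (b i) : U) := by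
          conv_lhs => rw [← b.sum_repr y]
          simp [map_sum, -Module.Basis.sum_repr]
        rw [hy, Finset.sum_smul]
        refine Finset.sum_eq_zero fun i _ => ?_
        rw [smul_assoc, hv i, smul_zero]
    | zero => rw [zero_smul]
    | add x y _ _ hx hy => rw [add_smul, hx, hy, add_zero]
    | smul c x _ hx => rw [smul_assoc, hx, smul_zero]
  -- inductive step
  have step : ∀ m : ℕ, FiniteDimensional k (annN k L V m) →
      FiniteDimensional k (annN k L V (m + 1)) := by
    intro m hfdm
    -- the map v ↦ (ι (b i) • v)_i
    have hmem : ∀ (v : annN k L V (m + 1)) (i : Fin (Module.finrank k L)),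
        ((ι k (b i) : U) • (v : V)) ∈ annN k L V m := by
      intro v i x hx
      rw [← mul_smul]
      refine v.2 _ ?_
      rw [pow_succ]
      exact Submodule.mul_mem_mul hx (Submodule.subset_span ⟨b i, rfl⟩)
    let f : annN k L V (m + 1) →ₗ[k] (Fin (Module.finrank k L) → annN k L V m) :=
      { toFun := fun v i => ⟨(ι k (b i) : U) • (v : V), hmem v i⟩
        map_add' := by
          intro v w
          funext i
          ext
          simp [smul_add]
        map_smul' := by
          intro c v
          funext i
          ext
          exact (smul_comm c (ι k (b i) : U) (v : V)).symm }
    have hker : FiniteDimensional k (LinearMap.ker f) := by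
      have : FiniteDimensional k (annN k L V 1) := hfd
      refine FiniteDimensional.of_injective
        (V := LinearMap.ker f) (V₂ := annN k L V 1)
        { toFun := fun w => ⟨((w : annN k L V (m + 1)) : V), ?_⟩
          map_add' := by intro v w; ext; rfl
          map_smul' := by intro c v; ext; rfl } ?_
      · refine key _ fun i => ?_
        have hw := w.2
        rw [LinearMap.mem_ker] at hw
        have := congrFun hw i
        exact Subtype.ext_iff.mp this
      · intro v w h
        have h2 : (((v : LinearMap.ker f) : annN k L V (m + 1)) : V) =
            (((w : LinearMap.ker f) : annN k L V (m + 1)) : V) := congrArg (Subtype.val : annN k L V 1 → V) h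
        exact Subtype.ext (Subtype.ext h2)
    exact fd_of_fd_ker_of_fd f hker
  intro m hm
  induction m, hm using Nat.le_induction with
  | base => exact hfd
  | succ m hm ih => exact step m ih
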